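/- Let N ∈ ℕ, α > 0, let M be a real symmetric positive definite N×N matrix and K a real symmetric N×N matrix, and set G = M + α K M⁻¹ K. Then G is symmetric positive definite and M G⁻¹ M ⪯ M, i.e. xᵀ M G⁻¹ M x ≤ xᵀ M x for all x ∈ ℝ^N. Consequently, if in addition xᵀ M x ≤ c₂ h^s ‖x‖² for all x (with constants c₂ > 0, h > 0, s ∈ ℝ), then the largest eigenvalue of M G⁻¹ M is at most c₂ h^s. -/

import Mathlib

open Matrix

/-- The estimate `λ_max(M G⁻¹ M) = O(hˢ)` where `G = M + α K M⁻¹ K`: `G` is symmetric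
positive definite, `M G⁻¹ M ⪯ M`, and consequently any eigenvalue of `M G⁻¹ M` is at
most `c₂ hˢ` whenever `xᵀ M x ≤ c₂ hˢ ‖x‖²` for all `x`. -/
theorem eigenvalue_bound_MGinvM
    (N : ℕ) (α : ℝ) (hα : 0 < α)
    (M K : Matrix (Fin N) (Fin N) ℝ)
    (hMpd : M.PosDef) (hMsymm : M.IsSymm) (hKsymm : K.IsSymm)
    (c₂ h s : ℝ) (hc₂ : 0 < c₂) (hh : 0 < h)
    (hMup : ∀ x : Fin N → ℝ, x ⬝ᵥ (M *ᵥ x) ≤ c₂ * h ^ s * (x ⬝ᵥ x)) :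
    (M + α • (K * M⁻¹ * K)).IsSymm ∧ (M + α • (K * M⁻¹ * K)).PosDef ∧
      (∀ x : Fin N → ℝ,
        x ⬝ᵥ ((M * (M + α • (K * M⁻¹ * K))⁻¹ * M) *ᵥ x) ≤ x ⬝ᵥ (M *ᵥ x)) ∧
      ∀ (μ : ℝ) (x : Fin N → ℝ), x ≠ 0 →
        (M * (M + α • (K * M⁻¹ * K))⁻¹ * M) *ᵥ x = μ • x → μ ≤ c₂ * h ^ s := by
  set D : Matrix (Fin N) (Fin N) ℝ := α • (K * M⁻¹ * K) with hD
  set G : Matrix (Fin N) (Fin N) ℝ := M + D with hG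
  -- `K M⁻¹ K` is positive semidefinite
  have hKMK : (K * M⁻¹ * K).PosSemidef := by
    have h1 : (Kᴴ * M⁻¹ * K).PosSemidef :=
      (hMpd.inv.posSemidef).conjTranspose_mul_mul_same K
    rwa [conjTranspose_eq_transpose_of_trivial, hKsymm.eq] at h1
  have hDpsd : D.PosSemidef := by
    refine PosSemidef.of_dotProduct_mulVec_nonneg ?_ (fun x => ?_)
    · show (α • (K * M⁻¹ * K))ᴴ = _
      have := hKMK.isHermitian.eq
      rw [conjTranspose_eq_transpose_of_trivial] at this ⊢
      rw [transpose_smul, this]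
    · have := hKMK.dotProduct_mulVec_nonneg x
      simp only [hD, smul_mulVec, dotProduct_smul, smul_eq_mul]
      exact mul_nonneg hα.le this
  have hGpd : G.PosDef := hMpd.add_posSemidef hDpsd
  have hGsymm : G.IsSymm := by
    have := hGpd.isHermitian
    rwa [IsHermitian, conjTranspose_eq_transpose_of_trivial] at this
  have hGunit : IsUnit G := hGpd.isUnit
  have hGinv : G * G⁻¹ = 1 := mul_nonsing_inv G (isUnit_iff_isUnit_det G |>.mp hGunit)
  -- symmetry helper: x ⬝ᵥ (A *ᵥ y) = y ⬝ᵥ (A *ᵥ x) for symmetric A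
  have hsym : ∀ (A : Matrix (Fin N) (Fin N) ℝ), A.IsSymm → ∀ x y : Fin N → ℝ,
      x ⬝ᵥ (A *ᵥ y) = y ⬝ᵥ (A *ᵥ x) := by
    intro A hA x y
    rw [dotProduct_mulVec, ← mulVec_transpose, hA.eq, dotProduct_comm]
  -- the key inequality
  have hkey : ∀ x : Fin N → ℝ,
      x ⬝ᵥ ((M * G⁻¹ * M) *ᵥ x) ≤ x ⬝ᵥ (M *ᵥ x) := by
    intro x
    set y : Fin N → ℝ := G⁻¹ *ᵥ (M *ᵥ x) with hy
    have hGy : G *ᵥ y = M *ᵥ x := by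
      rw [hy, mulVec_mulVec, hGinv, one_mulVec]
    have hMy : (M * G⁻¹ * M) *ᵥ x = M *ᵥ y := by
      rw [hy, mulVec_mulVec, mulVec_mulVec, Matrix.mul_assoc]
    rw [hMy]
    -- abbreviations
    have hbe : x ⬝ᵥ (M *ᵥ y) = y ⬝ᵥ (M *ᵥ x) := hsym M hMsymm x y
    have hGy' : y ⬝ᵥ (G *ᵥ y) = y ⬝ᵥ (M *ᵥ x) := by rw [hGy]
    have hGexp : y ⬝ᵥ (G *ᵥ y) = y ⬝ᵥ (M *ᵥ y) + y ⬝ᵥ (D *ᵥ y) := by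
      rw [hG, add_mulVec, dotProduct_add]
    have hDnn : 0 ≤ y ⬝ᵥ (D *ᵥ y) := by simpa using hDpsd.dotProduct_mulVec_nonneg y
    have hMnn : 0 ≤ (x - y) ⬝ᵥ (M *ᵥ (x - y)) := by simpa using hMpd.posSemidef.dotProduct_mulVec_nonneg (x - y)
    have hexp : (x - y) ⬝ᵥ (M *ᵥ (x - y)) =
        x ⬝ᵥ (M *ᵥ x) - x ⬝ᵥ (M *ᵥ y) - y ⬝ᵥ (M *ᵥ x) + y ⬝ᵥ (M *ᵥ y) := by
      rw [mulVec_sub, sub_dotProduct, dotProduct_sub, dotProduct_sub]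
      ring
    linarith
  refine ⟨hGsymm, hGpd, hkey, ?_⟩
  intro μ x hx hμ
  have hxx : 0 < x ⬝ᵥ x := by
    have := dotProduct_star_self_pos_iff (v := x) (R := ℝ)
    simpa using this.mpr hx
  have h1 : x ⬝ᵥ ((M * G⁻¹ * M) *ᵥ x) = μ * (x ⬝ᵥ x) := by
    rw [hμ, dotProduct_smul, smul_eq_mul]
  have h2 : μ * (x ⬝ᵥ x) ≤ c₂ * h ^ s * (x ⬝ᵥ x) := by
    rw [← h1]
    exact (hkey x).trans (hMup x)
  exact le_of_mul_le_mul_right (by linarith) hxx
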